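/- For every k with 0 ≤ k ≤ n, the number of distinct MWISP states reachable after k decisions is at most 2^{⌊n/2⌋}; that is, the width of the largest layer of a decision diagram compiled for an MWISP instance with n vertices does not exceed 2^{⌊n/2⌋}. (Size of MWISP's DD.) -/
import Mathlib


/-- The MWISP dynamic-programming state after `k` decisions, for an ordering
`σ : Fin n ≃ V` of the vertices and decision vector `d : Fin n → Bool`:
`S_0 = V`, and `S_{k+1}` removes `σ k` (decision `false`) or `σ k` together
with its neighborhood (decision `true`). -/
def mwispState {V : Type*} {n : ℕ} (G : SimpleGraph V) (σ : Fin n ≃ V)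
    (d : Fin n → Bool) : ℕ → Set V
  | 0 => Set.univ
  | k + 1 =>
    if h : k < n then
      if d ⟨k, h⟩ then
        mwispState G σ d k \ ({σ ⟨k, h⟩} ∪ G.neighborSet (σ ⟨k, h⟩))
      else
        mwispState G σ d k \ {σ ⟨k, h⟩}
    else mwispState G σ d k

/-- Layer `k` of the decision diagram: the set of distinct states reachable
after `k` decisions. -/
def mwispLayer {V : Type*} {n : ℕ} (G : SimpleGraph V) (σ : Fin n ≃ V)
    (k : ℕ) : Set (Set V) :=
  Set.range fun d : Fin n → Bool => mwispState G σ d k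

/-- The state after `k` decisions depends only on the first `k` decisions. -/
theorem mwispState_eq_of_agree {V : Type*} {n : ℕ} (G : SimpleGraph V) (σ : Fin n ≃ V)
    {d d' : Fin n → Bool} (k : ℕ) (h : ∀ i : Fin n, i.val < k → d i = d' i) :
    mwispState G σ d k = mwispState G σ d' k := by
  induction k with
  | zero => rfl
  | succ k ih =>
    have ih' := ih (fun i hi => h i (Nat.lt_succ_of_lt hi))
    simp only [mwispState]
    by_cases hkn : k < n
    · simp only [hkn, dif_pos]
      rw [h ⟨k, hkn⟩ (Nat.lt_succ_self k), ih']
    · simp [hkn, ih']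

/-- Every vertex in the state after `k` decisions has index at least `k`. -/
theorem mem_mwispState_le {V : Type*} {n : ℕ} (G : SimpleGraph V) (σ : Fin n ≃ V)
    (d : Fin n → Bool) : ∀ k, k ≤ n → ∀ v ∈ mwispState G σ d k, k ≤ ((σ.symm v : Fin n) : ℕ) := by
  intro k
  induction k with
  | zero => intro _ v _; exact Nat.zero_le _
  | succ k ih =>
    intro hk v hv
    have hkn : k < n := hk
    have hih : k ≤ ((σ.symm v : Fin n) : ℕ) ∧ v ≠ σ ⟨k, hkn⟩ := by
      simp only [mwispState, hkn, dif_pos] at hv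
      by_cases hd : d ⟨k, hkn⟩
      · rw [if_pos hd] at hv
        exact ⟨ih (Nat.le_of_lt hkn) v hv.1, fun he => hv.2 (Or.inl he)⟩
      · rw [if_neg hd] at hv
        exact ⟨ih (Nat.le_of_lt hkn) v hv.1, hv.2⟩
    have hne : ((σ.symm v : Fin n) : ℕ) ≠ k := by
      intro he
      apply hih.2
      have : σ.symm v = ⟨k, hkn⟩ := Fin.ext he
      rw [← this, Equiv.apply_symm_apply]
    omega

/-- Size of MWISP's DD: the width of every layer of a decision diagram
compiled for an MWISP instance with `n` vertices is at most `2 ^ (n / 2)`. -/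
theorem mwispLayer_ncard_le_max_width {V : Type*} [Fintype V] {n : ℕ}
    (G : SimpleGraph V) (σ : Fin n ≃ V) (k : ℕ) (hk : k ≤ n) :
    (mwispLayer G σ k).ncard ≤ 2 ^ (n / 2) := by
  classical
  -- Bound 1: at most `2 ^ k` states (determined by the first `k` decisions).
  have bound1 : (mwispLayer G σ k).ncard ≤ 2 ^ k := by
    set g : (Fin k → Bool) → Set V := fun c =>
      mwispState G σ (fun i => if h : i.val < k then c ⟨i.val, h⟩ else false) k with hg
    have hsub : mwispLayer G σ k ⊆ Set.range g := by
      rintro _ ⟨d, rfl⟩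
      refine ⟨fun i => d ⟨i.val, i.isLt.trans_le hk⟩, ?_⟩
      rw [hg]
      refine (mwispState_eq_of_agree G σ k (fun i hi => ?_)).symm
      simp only [hi, dif_pos]
    calc (mwispLayer G σ k).ncard ≤ (Set.range g).ncard :=
          Set.ncard_le_ncard hsub (Set.toFinite _)
      _ = Nat.card (Set.range g) := (Nat.card_coe_set_eq _).symm
      _ ≤ Nat.card (Fin k → Bool) := Finite.card_range_le g
      _ = 2 ^ k := by simp [Nat.card_eq_fintype_card]
  -- Bound 2: each state is a subset of the `n - k` remaining vertices.
  have bound2 : (mwispLayer G σ k).ncard ≤ 2 ^ (n - k) := by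
    set T : Set V := {v | k ≤ ((σ.symm v : Fin n) : ℕ)} with hT
    have hsub : mwispLayer G σ k ⊆ 𝒫 T := by
      rintro _ ⟨d, rfl⟩ v hv
      exact mem_mwispState_le G σ d k hk v hv
    have hcardT : Fintype.card T ≤ n - k := by
      have hinj : Function.Injective (fun v : T => (⟨((σ.symm v.1 : Fin n) : ℕ) - k, by
          have h1 : k ≤ ((σ.symm v.1 : Fin n) : ℕ) := v.2
          have h2 : ((σ.symm v.1 : Fin n) : ℕ) < n := (σ.symm v.1).isLt
          omega⟩ : Fin (n - k))) := by
        rintro ⟨v, hv⟩ ⟨w, hw⟩ he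
        simp only [Fin.mk.injEq] at he
        have hv' : k ≤ ((σ.symm v : Fin n) : ℕ) := hv
        have hw' : k ≤ ((σ.symm w : Fin n) : ℕ) := hw
        have : ((σ.symm v : Fin n) : ℕ) = ((σ.symm w : Fin n) : ℕ) := by omega
        have : σ.symm v = σ.symm w := Fin.ext this
        exact Subtype.ext (σ.symm.injective this)
      simpa using Fintype.card_le_of_injective _ hinj
    calc (mwispLayer G σ k).ncard ≤ (𝒫 T).ncard :=
          Set.ncard_le_ncard hsub (Set.toFinite _)
      _ = Nat.card (𝒫 T) := (Nat.card_coe_set_eq _).symm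
      _ = Nat.card (Set T) := Nat.card_congr (Equiv.Set.powerset T)
      _ = 2 ^ Fintype.card T := by rw [Nat.card_eq_fintype_card, Fintype.card_set]
      _ ≤ 2 ^ (n - k) := Nat.pow_le_pow_right (by norm_num) hcardT
  rcases le_or_gt k (n / 2) with h | h
  · exact bound1.trans (Nat.pow_le_pow_right (by norm_num) h)
  · exact bound2.trans (Nat.pow_le_pow_right (by norm_num) (by omega))
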